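/- The map π ↦ π' on G_{r,n} defined by: for 1 ≤ i ≤ n−1, if π(i) = j^[β] then π'(n−i) = (n+1−j)^[r−β mod r], and if π(n) = j^[β] then π'(n) = (n+1−j)^[r−1−β mod r], is a bijection of G_{r,n} satisfying exc(π') = rn − 1 − exc(π). -/

import Mathlib

open Finset Polynomial

/-- The group of colored permutations `G_{r,n} = Z_r ≀ S_n`, realized as bijections of the
colored alphabet `Σ = [n] × {0,…,r-1}` commuting with the color shift. -/
def ColoredPerm (r n : ℕ) [NeZero r] : Type :=
  {π : Equiv.Perm (Fin n × Fin r) //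
    ∀ x : Fin n × Fin r, π (x.1, x.2 + 1) = ((π x).1, (π x).2 + 1)}

/-- The color order on the colored alphabet:
`1^[r-1] < ⋯ < n^[r-1] < ⋯ < 1^[0] < ⋯ < n^[0]` (higher color is smaller). -/
def colorLt {r n : ℕ} (x y : Fin n × Fin r) : Prop :=
  y.2 < x.2 ∨ (x.2 = y.2 ∧ x.1 < y.1)

/-- The excedance number `exc` of a colored permutation. -/
noncomputable def cExc {r n : ℕ} [NeZero r] (π : ColoredPerm r n) : ℕ :=
  Nat.card {x : Fin n × Fin r // colorLt x (π.1 x)}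

/-- `exc_A(π) = |{i ∈ [n-1] : π(i) > i}|` (positions are the color-0 letters,
and `i ∈ [n-1]` corresponds to `i.val + 1 < n`). -/
noncomputable def cExcA {r n : ℕ} [NeZero r] (π : ColoredPerm r n) : ℕ :=
  Nat.card {i : Fin n // i.val + 1 < n ∧ colorLt (i, 0) (π.1 (i, 0))}

/-- `csum(π)`: the sum of the colors appearing in the window notation of `π`. -/
def csum {r n : ℕ} [NeZero r] (π : ColoredPerm r n) : ℕ :=
  ∑ i : Fin n, (π.1 (i, 0)).2.val

namespace ExcAux

open scoped Fin.NatCast Fin.CommRing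

attribute [local instance] Classical.propDecidable
set_option linter.unusedSectionVars false

variable {r n : ℕ} [NeZero r] [NeZero n]

def sg (π : ColoredPerm r n) (i : Fin n) : Fin n := (π.1 (i, 0)).1

def th (π : ColoredPerm r n) (i : Fin n) : Fin r := (π.1 (i, 0)).2

lemma shift (π : ColoredPerm r n) (i : Fin n) (c : Fin r) :
    π.1 (i, c) = (sg π i, th π i + c) := by
  have key : ∀ m : ℕ, π.1 (i, (m : Fin r)) = (sg π i, th π i + (m : Fin r)) := by
    intro m
    induction m with
    | zero => simp [sg, th]
    | succ k ih =>
      have h1 : ((k + 1 : ℕ) : Fin r) = (k : Fin r) + 1 := by push_cast; ring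
      have h2 := π.2 (i, (k : Fin r))
      simp only at h2
      rw [h1, h2, ih, add_assoc]
  have := key c.val
  rwa [Fin.cast_val_eq_self] at this

lemma sg_inj (π : ColoredPerm r n) : Function.Injective (sg π) := by
  intro i j h
  have h1 := shift π i 0
  have h2 := shift π j (th π i - th π j)
  rw [add_zero] at h1
  have h3 : π.1 (j, th π i - th π j) = (sg π i, th π i) := by
    rw [h2, ← h, add_sub_cancel]
  have := π.1.injective (h1.trans h3.symm)
  exact (Prod.ext_iff.mp this).1

def g (n : ℕ) [NeZero n] : Fin n → Fin n := fun p => (p + 1).rev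

lemma g_val (p : Fin n) : (g n p).val = if p.val = n - 1 then n - 1 else n - 2 - p.val := by
  have hp := p.isLt
  have hn : 0 < n := Nat.pos_of_ne_zero (NeZero.ne n)
  have hmod : ((p.val + 1 % n) % n) = if p.val = n - 1 then 0 else p.val + 1 := by
    rcases Nat.lt_or_ge 1 n with h1 | h1
    · have h1' : 1 % n = 1 := Nat.mod_eq_of_lt h1
      rw [h1']
      split_ifs with h
      · rw [h, Nat.sub_add_cancel (by omega)]; exact Nat.mod_self n
      · exact Nat.mod_eq_of_lt (by omega)
    · have hn1 : n = 1 := by omega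
      subst hn1
      have hp0 : p.val = 0 := by omega
      simp [hp0]
  simp only [g, Fin.val_rev, Fin.add_def, Fin.val_one']
  rw [hmod]
  split_ifs with h <;> omega

lemma g_invol : Function.Involutive (g n) := by
  intro p
  have hp := p.isLt
  have h1 := g_val p
  have h2 := g_val (g n p)
  rw [h1] at h2
  apply Fin.ext
  rw [h2]
  split_ifs at * <;> omega

/-- cardinality of an upper tail of `Fin r` -/
lemma card_filter_ge (k : ℕ) :
    (univ.filter fun c : Fin r => k ≤ c.val).card = r - k := by
  rcases Nat.lt_or_ge r k with hk | hk
  · have hemp : (univ.filter fun c : Fin r => k ≤ c.val) = ∅ := by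
      apply Finset.filter_false_of_mem
      intro c _
      intro hkc
      exact absurd (lt_of_le_of_lt hkc c.isLt) (Nat.lt_asymm hk)
    rw [hemp, Finset.card_empty]
    omega
  · rw [show r - k = Fintype.card (Fin (r - k)) from (Fintype.card_fin _).symm,
      ← Finset.card_univ]
    refine Finset.card_bij' (fun c hc => (⟨c.val - k, by
        simp only [Finset.mem_filter, Finset.mem_univ, true_and] at hc
        have := c.isLt; omega⟩ : Fin (r - k)))
      (fun m _ => (⟨m.val + k, by have := m.isLt; omega⟩ : Fin r)) ?_ ?_ ?_ ?_
    · intro a ha; exact Finset.mem_univ _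
    · intro a _
      simp only [Finset.mem_filter, Finset.mem_univ, true_and]
      exact Nat.le_add_left k _
    · intro a ha
      simp only [Finset.mem_filter, Finset.mem_univ, true_and] at ha
      apply Fin.ext; simp; omega
    · intro a _; apply Fin.ext; simp

noncomputable def cnt (π : ColoredPerm r n) (i : Fin n) : ℕ :=
  (univ.filter fun c : Fin r => colorLt (i, c) (π.1 (i, c))).card

lemma cExc_eq_sum (π : ColoredPerm r n) : cExc π = ∑ i : Fin n, cnt π i := by
  rw [cExc, Nat.card_eq_fintype_card, Fintype.card_subtype, Finset.card_filter,
    Fintype.sum_prod_type]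
  simp only [cnt, Finset.card_filter]

lemma cnt_eq (π : ColoredPerm r n) (i : Fin n) :
    cnt π i = if th π i = 0 then (if i < sg π i then r else 0) else (th π i).val := by
  unfold cnt
  have hπ : ∀ c : Fin r, π.1 (i, c) = (sg π i, th π i + c) := shift π i
  split_ifs with h0 hlt
  · rw [Finset.filter_true_of_mem, Finset.card_univ, Fintype.card_fin]
    intro c _
    rw [hπ c, h0, zero_add]
    exact Or.inr ⟨rfl, hlt⟩
  · rw [Finset.filter_false_of_mem, Finset.card_empty]
    intro c _ hc
    rw [hπ c, h0, zero_add] at hc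
    rcases hc with hc | hc
    · exact absurd hc (lt_irrefl c)
    · exact hlt hc.2
  · have hrt := (th π i).isLt
    have ht0 : (th π i).val ≠ 0 := fun hv => h0 (Fin.ext (by simpa using hv))
    have key : ∀ c : Fin r,
        colorLt (i, c) (π.1 (i, c)) ↔ r - (th π i).val ≤ c.val := by
      intro c
      rw [hπ c]
      unfold colorLt
      simp only [right_eq_add, h0, false_and, or_false]
      have hadd : (th π i + c).val = ((th π i).val + c.val) % r := by
        rw [Fin.add_def]
      rw [Fin.lt_def, hadd]
      have hc := c.isLt
      rcases Nat.lt_or_ge ((th π i).val + c.val) r with h | h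
      · rw [Nat.mod_eq_of_lt h]
        constructor <;> intro <;> omega
      · have heq : ((th π i).val + c.val) % r = (th π i).val + c.val - r := by
          rw [Nat.mod_eq_sub_mod h, Nat.mod_eq_of_lt (by omega)]
        rw [heq]
        constructor <;> intro <;> omega
    rw [Finset.filter_congr (fun c _ => key c), card_filter_ge]
    omega

def tw (p : Fin n) : Fin r := if p.val = n - 1 then 1 else 0

def T (π : ColoredPerm r n) : Fin n × Fin r → Fin n × Fin r :=
  fun x => ((sg π (g n x.1)).rev, -(th π (g n x.1)) - tw x.1 + x.2)

lemma T_inj (π : ColoredPerm r n) : Function.Injective (T π) := by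
  rintro ⟨p, c⟩ ⟨q, d⟩ h
  simp only [T, Prod.mk.injEq] at h
  have hpq : p = q := g_invol.injective (sg_inj π (Fin.rev_injective h.1))
  subst hpq
  exact Prod.ext rfl (by exact add_left_cancel h.2)

noncomputable def Psi (π : ColoredPerm r n) : ColoredPerm r n :=
  ⟨Equiv.ofBijective (T π) ((Finite.injective_iff_bijective).mp (T_inj π)), by
    rintro ⟨p, c⟩
    simp only [Equiv.ofBijective_apply, T]
    exact Prod.ext rfl (by rw [add_assoc])⟩

lemma Psi_apply (π : ColoredPerm r n) (x : Fin n × Fin r) :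
    (Psi π).1 x = ((sg π (g n x.1)).rev, -(th π (g n x.1)) - tw x.1 + x.2) := rfl

lemma sg_Psi (π : ColoredPerm r n) (p : Fin n) :
    sg (Psi π) p = (sg π (g n p)).rev := rfl

lemma th_Psi (π : ColoredPerm r n) (p : Fin n) :
    th (Psi π) p = -(th π (g n p)) - tw p := by
  simp [th, Psi_apply]

lemma neg_val' (a : Fin r) (h : a ≠ 0) : (-a).val = r - a.val := by
  have h1 : (-a).val = (r - a.val) % r := by rw [Fin.neg_def]
  have h2 : a.val ≠ 0 := fun hv => h (Fin.ext (by simpa using hv))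
  have := a.isLt
  rw [h1, Nat.mod_eq_of_lt (by omega)]

lemma cnt_add (π : ColoredPerm r n) (i : Fin n) :
    cnt π i + cnt (Psi π) (g n i) = if i.val = n - 1 then r - 1 else r := by
  have hr : 0 < r := Nat.pos_of_ne_zero (NeZero.ne r)
  have hn : 0 < n := Nat.pos_of_ne_zero (NeZero.ne n)
  have hi := i.isLt
  have hs := (sg π i).isLt
  have ht := (th π i).isLt
  rw [cnt_eq, cnt_eq, sg_Psi, th_Psi, g_invol i]
  by_cases hlast : i.val = n - 1
  · -- last position
    rw [if_pos hlast]
    have hgi : g n i = i := Fin.ext (by rw [g_val, if_pos hlast, hlast])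
    have htw : tw (g n i) = (1 : Fin r) := by rw [hgi]; exact if_pos hlast
    rw [htw, hgi]
    have hlt1 : ¬ i < sg π i := by
      rw [Fin.lt_def]; omega
    have hlt2 : ¬ i < (sg π i).rev := by
      rw [Fin.lt_def, Fin.val_rev]; omega
    set t := th π i with hts
    have e1 : (-t - 1 : Fin r) = -(t + 1) := by ring
    rw [e1]
    have huv : (t + 1).val = (t.val + 1) % r := by
      rw [Fin.add_def, Fin.val_one']
      rcases Nat.lt_or_ge 1 r with h | h
      · rw [Nat.mod_eq_of_lt h]
      · have : r = 1 := by omega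
        simp [this]
    rcases Nat.lt_or_ge (t.val + 1) r with hcase | hcase
    · -- no wrap : t ≠ -1
      have hu : (t + 1 : Fin r) ≠ 0 := by
        intro h
        have : (t + 1 : Fin r).val = 0 := by rw [h]; rfl
        rw [huv, Nat.mod_eq_of_lt hcase] at this
        omega
      have hnu : (-(t + 1) : Fin r) ≠ 0 := by rwa [neg_ne_zero]
      rw [if_neg hnu, neg_val' _ hu, huv, Nat.mod_eq_of_lt hcase]
      have hval0 : (t = 0) ↔ (t.val = 0) := by
        constructor
        · intro h; rw [h]; rfl
        · intro h; exact Fin.ext (by simpa using h)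
      split_ifs with h1
      · have h1v : t.val = 0 := hval0.mp h1
        omega
      · have h1v : t.val ≠ 0 := fun hv => h1 (hval0.mpr hv)
        omega
    · -- wrap : t.val = r - 1, t + 1 = 0
      have htv : t.val = r - 1 := by omega
      have hu : (t + 1 : Fin r) = 0 := by
        apply Fin.ext
        rw [huv, Fin.val_zero, show t.val + 1 = r by omega, Nat.mod_self]
      rw [hu, neg_zero, if_pos rfl, if_neg hlt2]
      split_ifs with h1
      · have : t.val = 0 := by rw [h1]; rfl
        omega
      · omega
  · -- not last position
    rw [if_neg hlast]
    have hgival : (g n i).val = n - 2 - i.val := by rw [g_val, if_neg hlast]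
    have htw : tw (g n i) = (0 : Fin r) := by
      unfold tw
      rw [if_neg]
      rw [hgival]; omega
    rw [htw, sub_zero]
    have hcmp : (g n i) < (sg π i).rev ↔ ¬ i < sg π i := by
      rw [Fin.lt_def, Fin.lt_def, hgival, Fin.val_rev]
      omega
    by_cases h0 : th π i = 0
    · rw [if_pos h0, h0, neg_zero, if_pos rfl]
      by_cases hlt : i < sg π i
      · rw [if_pos hlt, if_neg (by rw [hcmp]; exact fun h => h hlt)]
        omega
      · rw [if_neg hlt, if_pos (hcmp.mpr hlt)]
        omega
    · rw [if_neg h0, if_neg (fun hh => h0 (neg_eq_zero.mp hh)), neg_val' _ h0]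
      have h2 : (th π i).val ≠ 0 := fun hv => h0 (Fin.ext (by simpa using hv))
      omega

lemma main_sum (π : ColoredPerm r n) : cExc π + cExc (Psi π) = n * r - 1 := by
  have hr : 0 < r := Nat.pos_of_ne_zero (NeZero.ne r)
  have hn : 0 < n := Nat.pos_of_ne_zero (NeZero.ne n)
  rw [cExc_eq_sum, cExc_eq_sum]
  have hre : ∑ p : Fin n, cnt (Psi π) p = ∑ i : Fin n, cnt (Psi π) (g n i) := by
    rw [← Equiv.sum_comp (g_invol.toPerm (g n)) (cnt (Psi π))]
    simp [Function.Involutive.coe_toPerm]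
  rw [hre, ← Finset.sum_add_distrib,
    Finset.sum_congr rfl (fun i _ => cnt_add π i)]
  set b : Fin n := ⟨n - 1, by omega⟩ with hb
  have hcond : ∀ i : Fin n, (i.val = n - 1) ↔ i = b := by
    intro i
    constructor
    · intro h; exact Fin.ext h
    · intro h; rw [h]
  rw [Finset.sum_eq_sum_sdiff_singleton_add (Finset.mem_univ b)]
  have hrest : ∑ i ∈ univ \ {b}, (if i.val = n - 1 then r - 1 else r) = (n - 1) * r := by
    rw [Finset.sum_congr rfl (fun i hi => by
      rw [if_neg]
      rw [hcond i]
      simp only [Finset.mem_sdiff, Finset.mem_singleton] at hi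
      exact hi.2)]
    rw [Finset.sum_const, smul_eq_mul]
    congr 1
    rw [Finset.card_sdiff_of_subset (by simp), Finset.card_univ, Fintype.card_fin,
      Finset.card_singleton]
  rw [hrest, if_pos (by simp [hb])]
  have : n * r = (n - 1) * r + r := by
    rcases Nat.exists_eq_succ_of_ne_zero (by omega : n ≠ 0) with ⟨m, hm⟩
    subst hm
    simp [Nat.succ_mul]
  omega

lemma Psi_inj : Function.Injective (Psi (r := r) (n := n)) := by
  intro π π' h
  have hsg : ∀ i, sg π i = sg π' i := by
    intro i
    have h1 : sg (Psi π) (g n i) = sg (Psi π') (g n i) := by rw [h]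
    rw [sg_Psi, sg_Psi, g_invol i] at h1
    exact Fin.rev_injective h1
  have hth : ∀ i, th π i = th π' i := by
    intro i
    have h1 : th (Psi π) (g n i) = th (Psi π') (g n i) := by rw [h]
    rw [th_Psi, th_Psi, g_invol i] at h1
    exact neg_injective (sub_left_inj.mp h1)
  apply Subtype.ext
  apply Equiv.ext
  rintro ⟨i, c⟩
  rw [shift, shift, hsg, hth]

end ExcAux

/-- The map `π ↦ π'` on `G_{r,n}` given by: for `1 ≤ i ≤ n−1`, if `π(i) = j^[β]` then
`π'(n−i) = (n+1−j)^[r−β mod r]`, and if `π(n) = j^[β]` then `π'(n) = (n+1−j)^[r−1−β mod r]`,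
is a bijection of `G_{r,n}` satisfying `exc(π') = rn − 1 − exc(π)`.
(Here positions and digits are `0`-indexed via `Fin n`, so the position `i ∈ [n−1]`
corresponds to `⟨i.val⟩` with `i.val + 1 < n`, `n − i` and `n + 1 − j` are given by
`Fin.rev`, and colors live in `Fin r`, where `r − β mod r = −β` and
`r − 1 − β mod r = −β − 1`.) -/
theorem exc_complement_bijection (r n : ℕ) [NeZero r] (hn : 1 ≤ n) :
    ∃ Φ : ColoredPerm r n ≃ ColoredPerm r n,
      (∀ π : ColoredPerm r n,
        (∀ i : Fin n, ∀ h : i.val + 1 < n,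
          (Φ π).1 ((⟨i.val + 1, h⟩ : Fin n).rev, 0) =
            ((π.1 (i, 0)).1.rev, -(π.1 (i, 0)).2)) ∧
        (Φ π).1 ((⟨n - 1, by omega⟩ : Fin n), 0) =
          ((π.1 ((⟨n - 1, by omega⟩ : Fin n), 0)).1.rev,
            -(π.1 ((⟨n - 1, by omega⟩ : Fin n), 0)).2 - 1)) ∧
      ∀ π : ColoredPerm r n, cExc (Φ π) = r * n - 1 - cExc π := by
  haveI : NeZero n := ⟨by omega⟩
  haveI : Finite (ColoredPerm r n) :=
    inferInstanceAs (Finite {π : Equiv.Perm (Fin n × Fin r) //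
      ∀ x : Fin n × Fin r, π (x.1, x.2 + 1) = ((π x).1, (π x).2 + 1)})
  refine ⟨Equiv.ofBijective ExcAux.Psi
    ((Finite.injective_iff_bijective).mp ExcAux.Psi_inj), ?_, ?_⟩
  · intro π
    constructor
    · intro i h
      have hpt : (⟨i.val + 1, h⟩ : Fin n).rev = ExcAux.g n i := by
        have heq : (⟨i.val + 1, h⟩ : Fin n) = i + 1 := by
          apply Fin.ext
          have hadd : (i + 1 : Fin n).val = (i.val + (1 : Fin n).val) % n := by
            rw [Fin.add_def]
          have h1n : ((1 : Fin n)).val = 1 := by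
            rw [Fin.val_one']; exact Nat.mod_eq_of_lt (by omega)
          rw [hadd, h1n, Nat.mod_eq_of_lt h]
        rw [heq]; rfl
      rw [Equiv.ofBijective_apply, hpt, ExcAux.Psi_apply]
      have hg : ExcAux.g n (ExcAux.g n i) = i := ExcAux.g_invol i
      have htw : ExcAux.tw (ExcAux.g n i) = (0 : Fin r) := by
        unfold ExcAux.tw
        rw [if_neg]
        rw [ExcAux.g_val, if_neg (by omega)]
        omega
      rw [hg, htw, sub_zero, add_zero]
      rfl
    · set b : Fin n := ⟨n - 1, by omega⟩ with hb
      have hgb : ExcAux.g n b = b := Fin.ext (by rw [ExcAux.g_val, if_pos rfl])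
      have htw : ExcAux.tw b = (1 : Fin r) := if_pos rfl
      rw [Equiv.ofBijective_apply, ExcAux.Psi_apply]
      simp only [hgb, htw, add_zero]
      rfl
  · intro π
    have h := ExcAux.main_sum π
    rw [Equiv.ofBijective_apply]
    rw [mul_comm r n]
    omega
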